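/- arXiv:1007.0509 — 2 statements merged into one kernel-verified Lean document; each statement's English description precedes it below -/
import Mathlib

section
/- (Characterization of the contingent epiderivative as a lower Dini derivative) Let g : ℝ → ℝ be a function, t ∈ ℝ, and u ∈ ℝ. If v ∈ ℝ satisfies v = liminf_{h→0+, u'→u} (g(t + h u') − g(t))/h, then (u, v) belongs to the contingent cone to the epigraph Epi(g) at (t, g(t)), and moreover v = inf{w : (u, w) ∈ T_{Epi(g)}(t, g(t))}. -/
open Filter

noncomputable def contingentCone (K : Set (ℝ × ℝ)) (p : ℝ × ℝ) : Set (ℝ × ℝ) :=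
  {v | Filter.liminf (fun h : ℝ => Metric.infDist (p + h • v) K / h)
      (nhdsWithin 0 (Set.Ioi 0)) = 0}

def Epi (g : ℝ → ℝ) : Set (ℝ × ℝ) := {q | g q.1 ≤ q.2}

noncomputable def epider (g : ℝ → ℝ) (t u : ℝ) : EReal :=
  sInf {w : EReal | ∃ v : ℝ, w = (v : EReal) ∧ (u, v) ∈ contingentCone (Epi g) (t, g t)}

section Aux

open Set

lemma EpiChar.pt_eq (t a u w h : ℝ) :
    ((t, a) : ℝ × ℝ) + h • ((u, w) : ℝ × ℝ) = (t + h * u, a + h * w) := by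
  simp [Prod.ext_iff, smul_eq_mul]

lemma EpiChar.abs_sub_self_abs (w : ℝ) : abs (w - abs w) ≤ 2 * abs w := by
  rcases le_or_gt 0 w with hw | hw
  · rw [abs_of_nonneg hw, sub_self, abs_zero]; positivity
  · rw [abs_of_neg hw, show w - -w = 2 * w by ring, abs_of_neg (by linarith : 2 * w < 0)]
    linarith

lemma EpiChar.eventually_pos_lt {c : ℝ} (hc : 0 < c) :
    ∀ᶠ x in nhdsWithin (0:ℝ) (Set.Ioi 0), 0 < x ∧ x < c := by
  have h1 : ∀ᶠ x in nhdsWithin (0:ℝ) (Set.Ioi 0), x < c :=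
    eventually_nhdsWithin_of_eventually_nhds (eventually_lt_nhds hc)
  filter_upwards [self_mem_nhdsWithin, h1] with x hx hx' using ⟨hx, hx'⟩

lemma EpiChar.mem_cone_of_approx (g : ℝ → ℝ) (t u w : ℝ)
    (H : ∀ δ > (0:ℝ), ∀ ε > (0:ℝ), ∃ h : ℝ, 0 < h ∧ h < ε ∧
      Metric.infDist ((t + h * u, g t + h * w) : ℝ × ℝ) (Epi g) ≤ δ * h) :
    (u, w) ∈ contingentCone (Epi g) (t, g t) := by
  simp only [contingentCone, Set.mem_setOf_eq, EpiChar.pt_eq]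
  set l := nhdsWithin (0:ℝ) (Set.Ioi 0) with hl
  set f : ℝ → ℝ := fun h =>
    Metric.infDist ((t + h * u, g t + h * w) : ℝ × ℝ) (Epi g) / h with hf
  have hge : ∀ᶠ h in l, 0 ≤ f h := by
    filter_upwards [self_mem_nhdsWithin] with h (hh : (0:ℝ) < h)
    exact div_nonneg Metric.infDist_nonneg hh.le
  have hfreq : ∀ δ > (0:ℝ), ∃ᶠ h in l, f h ≤ δ := by
    intro δ hδ
    rw [(nhdsGT_basis (0:ℝ)).frequently_iff]
    intro ε hε
    obtain ⟨h, h0, hε', hd⟩ := H δ hδ ε hε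
    exact ⟨h, ⟨h0, hε'⟩, (div_le_iff₀ h0).2 (by linarith)⟩
  have hbdd : IsBoundedUnder (· ≥ ·) l f := ⟨0, by simpa [eventually_map] using hge⟩
  have hcob : IsCoboundedUnder (· ≥ ·) l f :=
    IsCoboundedUnder.of_frequently_le (hfreq 1 one_pos)
  have h1 : liminf f l ≤ 0 := by
    refine le_of_forall_pos_le_add fun δ hδ => ?_
    simpa using liminf_le_of_frequently_le (hfreq δ hδ) hbdd
  have h2 : (0:ℝ) ≤ liminf f l := le_liminf_of_le hcob hge
  exact le_antisymm h1 h2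

lemma EpiChar.cone_exists (g : ℝ → ℝ) (t u w : ℝ)
    (hc : (u, w) ∈ contingentCone (Epi g) (t, g t)) :
    ∀ δ > (0:ℝ), ∀ ε > (0:ℝ), ∃ h : ℝ, 0 < h ∧ h < ε ∧
      Metric.infDist ((t + h * u, g t + h * w) : ℝ × ℝ) (Epi g) < δ * h := by
  intro δ hδ ε hε
  set l := nhdsWithin (0:ℝ) (Set.Ioi 0) with hl
  simp only [contingentCone, Set.mem_setOf_eq, EpiChar.pt_eq] at hc
  set f : ℝ → ℝ := fun h =>
    Metric.infDist ((t + h * u, g t + h * w) : ℝ × ℝ) (Epi g) / h with hf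
  have hub : ∀ᶠ h in l, f h ≤ |u| + 2 * |w| := by
    filter_upwards [self_mem_nhdsWithin] with h (hh : (0:ℝ) < h)
    have hq : ((t + h * 0, g t + h * |w|) : ℝ × ℝ) ∈ Epi g := by
      simp only [Epi, Set.mem_setOf_eq]
      have : 0 ≤ h * |w| := by positivity
      simpa using this
    have key : Metric.infDist ((t + h * u, g t + h * w) : ℝ × ℝ) (Epi g)
        ≤ h * (|u| + 2 * |w|) := by
      refine (Metric.infDist_le_dist_of_mem hq).trans ?_
      rw [Prod.dist_eq]
      apply max_le
      · simp only [Real.dist_eq]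
        have e : t + h * u - (t + h * 0) = h * u := by ring
        rw [e, abs_mul, abs_of_pos hh]
        nlinarith [abs_nonneg w, abs_nonneg u]
      · simp only [Real.dist_eq]
        have e : g t + h * w - (g t + h * |w|) = h * (w - |w|) := by ring
        rw [e, abs_mul, abs_of_pos hh]
        have h2 := EpiChar.abs_sub_self_abs w
        nlinarith [abs_nonneg u]
    show Metric.infDist ((t + h * u, g t + h * w) : ℝ × ℝ) (Epi g) / h ≤ |u| + 2 * |w|
    rw [div_le_iff₀ hh]
    nlinarith
  have hcob : IsCoboundedUnder (· ≥ ·) l f :=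
    IsCoboundedUnder.of_frequently_le hub.frequently
  have hfreq : ∃ᶠ h in l, f h < δ := by
    apply frequently_lt_of_liminf_lt hcob
    rw [hc]; exact hδ
  obtain ⟨h, ⟨hh0, hhε⟩, hfh⟩ := ((EpiChar.eventually_pos_lt hε).and_frequently hfreq).exists
  refine ⟨h, hh0, hhε, ?_⟩
  have h2 : Metric.infDist ((t + h * u, g t + h * w) : ℝ × ℝ) (Epi g) / h < δ := hfh
  have := (div_lt_iff₀ hh0).1 h2
  linarith

end Aux

theorem epider_dini_char (g : ℝ → ℝ) (t u v : ℝ)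
    (hv : Tendsto
      (fun ε : ℝ => sInf {r : ℝ | ∃ h u', 0 < h ∧ h < ε ∧ |u' - u| < ε ∧
        r = (g (t + h * u') - g t) / h})
      (nhdsWithin 0 (Set.Ioi 0)) (nhds v)) :
    (u, v) ∈ contingentCone (Epi g) (t, g t) ∧
      v = sInf {w : ℝ | (u, w) ∈ contingentCone (Epi g) (t, g t)} := by
  set S : ℝ → Set ℝ := fun ε => {r : ℝ | ∃ h u', 0 < h ∧ h < ε ∧ |u' - u| < ε ∧
    r = (g (t + h * u') - g t) / h} with hSdef
  set l := nhdsWithin (0:ℝ) (Set.Ioi 0) with hl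
  -- Part 1
  have hpart1 : (u, v) ∈ contingentCone (Epi g) (t, g t) := by
    apply EpiChar.mem_cone_of_approx
    intro δ hδ ε hε
    have hev : ∀ᶠ ε' in l, dist (sInf (S ε')) v < δ / 2 :=
      Metric.tendsto_nhds.1 hv (δ / 2) (by positivity)
    obtain ⟨ε₁, ⟨h10, h1m⟩, hd1⟩ :=
      ((EpiChar.eventually_pos_lt (lt_min hε hδ)).and hev).exists
    have hSne : (S ε₁).Nonempty := by
      refine ⟨(g (t + (ε₁/2) * u) - g t) / (ε₁/2), ε₁/2, u, by positivity, by linarith, ?_, rfl⟩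
      simpa using h10
    obtain ⟨r, hrS, hrlt⟩ := Real.lt_sInf_add_pos hSne (show (0:ℝ) < δ/2 by positivity)
    have hrv : r < v + δ := by
      have := abs_lt.1 (by rwa [Real.dist_eq] at hd1)
      linarith
    obtain ⟨h, u', hh0, hhε₁, hu', hr⟩ := hrS
    refine ⟨h, hh0, lt_trans hhε₁ (lt_of_lt_of_le h1m (min_le_left _ _)), ?_⟩
    have hgx : g (t + h * u') = g t + h * r := by
      rw [hr]; field_simp; ring
    have hq : ((t + h * u', max (g (t + h * u')) (g t + h * v)) : ℝ × ℝ) ∈ Epi g := by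
      simp only [Epi, Set.mem_setOf_eq]; exact le_max_left _ _
    refine (Metric.infDist_le_dist_of_mem hq).trans ?_
    rw [Prod.dist_eq]
    have hu'δ : |u' - u| < δ := lt_trans hu' (lt_of_lt_of_le h1m (min_le_right _ _))
    apply max_le
    · rw [Real.dist_eq, show t + h * u - (t + h * u') = h * (u - u') by ring,
        abs_mul, abs_of_pos hh0, abs_sub_comm]
      nlinarith
    · rw [Real.dist_eq, hgx]
      dsimp only
      rcases max_cases (g t + h * r) (g t + h * v) with ⟨e, he⟩ | ⟨e, he⟩ <;> rw [e]
      · rw [abs_le]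
        constructor <;> nlinarith
      · simp only [sub_self, abs_zero]
        positivity
  refine ⟨hpart1, ?_⟩
  by_cases hB : ∃ ε > (0:ℝ), BddBelow (S ε)
  · -- bounded case : v is a lower bound for the cone slice
    obtain ⟨ε₀, hε₀, hbdd⟩ := hB
    have hlb : ∀ w ∈ {w : ℝ | (u, w) ∈ contingentCone (Epi g) (t, g t)}, v ≤ w := by
      intro w hw
      by_contra hvw
      push_neg at hvw
      set δ := (v - w) / 4 with hδdef
      have hδ : 0 < δ := by rw [hδdef]; linarith
      have hev : ∀ᶠ ε' in l, dist (sInf (S ε')) v < δ :=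
        Metric.tendsto_nhds.1 hv δ hδ
      obtain ⟨ε₁, ⟨h10, h1m⟩, hd1⟩ :=
        ((EpiChar.eventually_pos_lt (lt_min hε₀ hδ)).and hev).exists
      have hsub : S ε₁ ⊆ S ε₀ := by
        rintro r ⟨h, u', a, b, c, d⟩
        exact ⟨h, u', a, lt_trans b (lt_of_lt_of_le h1m (min_le_left _ _)),
          lt_trans c (lt_of_lt_of_le h1m (min_le_left _ _)), d⟩
      have hlbS : ∀ r ∈ S ε₁, v - δ < r := by
        intro r hr
        have h1 : v - δ < sInf (S ε₁) := by
          have := abs_lt.1 (by rwa [Real.dist_eq] at hd1)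
          linarith
        exact lt_of_lt_of_le h1 (csInf_le (hbdd.mono hsub) hr)
      obtain ⟨h, hh0, hhε₁, hdist⟩ :=
        EpiChar.cone_exists g t u w hw (min δ (ε₁/2)) (by positivity) ε₁ h10
      have hne : (Epi g).Nonempty := ⟨(t, g t), by simp [Epi]⟩
      rw [Metric.infDist_lt_iff hne] at hdist
      obtain ⟨⟨x, y⟩, hq, hqd⟩ := hdist
      rw [Prod.dist_eq, max_lt_iff, Real.dist_eq, Real.dist_eq] at hqd
      dsimp only at hqd
      obtain ⟨hqd1, hqd2⟩ := hqd
      rw [abs_sub_comm] at hqd1 hqd2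
      set u'' := (x - t) / h with hu''def
      have hx : t + h * u'' = x := by
        rw [hu''def]; field_simp; ring
      have hmle : min δ (ε₁/2) * h ≤ (ε₁/2) * h := by
        have := min_le_right δ (ε₁/2)
        nlinarith
      have hu'' : |u'' - u| < ε₁ := by
        have e : u'' - u = (x - (t + h * u)) / h := by
          rw [hu''def]; field_simp; ring
        rw [e, abs_div, abs_of_pos hh0, div_lt_iff₀ hh0]
        calc |x - (t + h * u)| < min δ (ε₁/2) * h := hqd1
          _ ≤ (ε₁/2) * h := hmle
          _ < ε₁ * h := by nlinarith
      have hrS : (g x - g t) / h ∈ S ε₁ := ⟨h, u'', hh0, hhε₁, hu'', by rw [hx]⟩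
      have hlow := hlbS _ hrS
      have hgx : g x ≤ y := hq
      have hup : (g x - g t) / h < w + δ := by
        rw [div_lt_iff₀ hh0]
        have h1 : |y - (g t + h * w)| < δ * h := by
          have h2 : min δ (ε₁/2) * h ≤ δ * h := by
            nlinarith [min_le_left δ (ε₁/2)]
          linarith
        have := abs_lt.1 h1
        nlinarith
      rw [hδdef] at hlow hup
      linarith
    exact le_antisymm (le_csInf ⟨v, hpart1⟩ hlb) (csInf_le ⟨v, hlb⟩ hpart1)
  · -- unbounded case : every w is in the cone and v = 0
    push_neg at hB
    have hv0 : v = 0 := by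
      have he : (fun ε => sInf (S ε)) =ᶠ[l] fun _ => (0:ℝ) := by
        filter_upwards [self_mem_nhdsWithin] with ε (hε : (0:ℝ) < ε)
        exact Real.sInf_of_not_bddBelow (hB ε hε)
      exact tendsto_nhds_unique (hv.congr' he) tendsto_const_nhds
    have hall : ∀ w : ℝ, (u, w) ∈ contingentCone (Epi g) (t, g t) := by
      intro w
      apply EpiChar.mem_cone_of_approx
      intro δ hδ ε hε
      have hm : (0:ℝ) < min ε δ := lt_min hε hδ
      obtain ⟨r, hrS, hrw⟩ := (not_bddBelow_iff.1 (hB _ hm)) w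
      obtain ⟨h, u', hh0, hhm, hu', hr⟩ := hrS
      refine ⟨h, hh0, lt_of_lt_of_le hhm (min_le_left _ _), ?_⟩
      have hgx : g (t + h * u') = g t + h * r := by
        rw [hr]; field_simp; ring
      have hq : ((t + h * u', g t + h * w) : ℝ × ℝ) ∈ Epi g := by
        show g (t + h * u') ≤ g t + h * w
        rw [hgx]
        nlinarith
      refine (Metric.infDist_le_dist_of_mem hq).trans ?_
      rw [Prod.dist_eq]
      have hu'δ : |u' - u| < δ := lt_of_lt_of_le hu' (min_le_right _ _)
      apply max_le
      · rw [Real.dist_eq, show t + h * u - (t + h * u') = h * (u - u') by ring,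
          abs_mul, abs_of_pos hh0, abs_sub_comm]
        nlinarith
      · simp only [Real.dist_eq, sub_self, abs_zero]
        positivity
    have hW : {w : ℝ | (u, w) ∈ contingentCone (Epi g) (t, g t)} = Set.univ :=
      Set.eq_univ_of_forall hall
    rw [hW, hv0]
    refine (Real.sInf_of_not_bddBelow ?_).symm
    rintro ⟨b, hb⟩
    have := hb (Set.mem_univ (b - 1))
    linarith
end

section
/- If f : ℝ → ℝ is differentiable at t, then the contingent epiderivative of f at t satisfies D_↑f(t)(u) = u f'(t) for every u ∈ ℝ. -/
open Filter

set_option maxHeartbeats 1000000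

open Metric

lemma phi_tendsto (f : ℝ → ℝ) (t : ℝ) (hf : DifferentiableAt ℝ f t) (u : ℝ) :
    Tendsto (fun h : ℝ => (f (t + h * u) - f t) / h) (nhdsWithin 0 (Set.Ioi 0))
      (nhds (u * deriv f t)) := by
  have h1 : HasDerivAt (fun h : ℝ => t + h * u) u 0 := by
    simpa using ((hasDerivAt_id (0:ℝ)).mul_const u).const_add t
  have h2 : HasDerivAt (fun h : ℝ => f (t + h * u)) (deriv f t * u) 0 := by
    exact (by simpa using hf.hasDerivAt :
      HasDerivAt f (deriv f t) ((fun h : ℝ => t + h * u) 0)).comp 0 h1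
  have h3 := hasDerivAt_iff_tendsto_slope.mp h2
  have h4 : Tendsto (slope (fun h : ℝ => f (t + h * u)) 0) (nhdsWithin 0 (Set.Ioi 0))
      (nhds (deriv f t * u)) :=
    h3.mono_left (nhdsWithin_mono _ (fun x hx => ne_of_gt hx))
  rw [mul_comm]
  refine h4.congr' ?_
  filter_upwards [self_mem_nhdsWithin] with h hh
  simp [slope_def_field]

lemma quot_le (f : ℝ → ℝ) (t u v : ℝ) (h : ℝ) (hh : 0 < h) :
    infDist (((t, f t) : ℝ × ℝ) + h • (u, v)) (Epi f) / h
      ≤ max ((f (t + h*u) - f t)/h - v) 0 := by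
  have hq : ((t, f t) : ℝ × ℝ) + h • (u, v) = (t + h*u, f t + h*v) := by
    simp [Prod.ext_iff, smul_eq_mul]
  set p : ℝ × ℝ := (t + h*u, max (f (t + h*u)) (f t + h*v)) with hp
  have hpmem : p ∈ Epi f := show f _ ≤ _ from le_max_left _ _
  have hdist : dist (((t, f t) : ℝ × ℝ) + h • (u, v)) p = max (f (t+h*u) - f t - h*v) 0 := by
    rw [hq, Prod.dist_eq]
    simp [Real.dist_eq, hp]
    rcases le_total (f (t + h*u)) (f t + h*v) with hc | hc
    · simp [max_eq_right hc, max_eq_right (by linarith : f (t+h*u) - f t - h*v ≤ 0)]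
    · rw [max_eq_left hc, abs_of_nonpos (by linarith), max_eq_left (by linarith)]
      ring
  have h1 : infDist (((t, f t) : ℝ × ℝ) + h • (u, v)) (Epi f) ≤ max (f (t+h*u) - f t - h*v) 0 :=
    hdist ▸ infDist_le_dist_of_mem hpmem
  have h2 : max (f (t+h*u) - f t - h*v) 0 / h = max ((f (t + h*u) - f t)/h - v) 0 := by
    rw [← max_div_div_right hh.le, zero_div]
    congr 1
    field_simp
  rw [← h2]
  gcongr

lemma memA (f : ℝ → ℝ) (t : ℝ) (hf : DifferentiableAt ℝ f t) (u v : ℝ)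
    (hv : u * deriv f t ≤ v) :
    (u, v) ∈ contingentCone (Epi f) (t, f t) := by
  have hub : Tendsto (fun h : ℝ => max ((f (t + h*u) - f t)/h - v) 0)
      (nhdsWithin 0 (Set.Ioi 0)) (nhds 0) := by
    have := ((phi_tendsto f t hf u).sub_const v).max
      (tendsto_const_nhds : Tendsto (fun _ : ℝ => (0:ℝ)) _ _)
    rwa [max_eq_right (by linarith)] at this
  have htends : Tendsto
      (fun h : ℝ => infDist (((t, f t) : ℝ × ℝ) + h • (u, v)) (Epi f) / h)
      (nhdsWithin 0 (Set.Ioi 0)) (nhds 0) := by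
    refine tendsto_of_tendsto_of_tendsto_of_le_of_le' tendsto_const_nhds hub ?_ ?_
    · filter_upwards [self_mem_nhdsWithin] with h hh
      exact div_nonneg infDist_nonneg (le_of_lt hh)
    · filter_upwards [self_mem_nhdsWithin] with h hh
      exact quot_le f t u v h hh
  exact htends.liminf_eq

lemma memB (f : ℝ → ℝ) (t : ℝ) (hf : DifferentiableAt ℝ f t) (u v : ℝ)
    (hmem : (u, v) ∈ contingentCone (Epi f) (t, f t)) :
    u * deriv f t ≤ v := by
  by_contra hlt
  push_neg at hlt
  obtain ⟨c, hc⟩ : ∃ c, c = deriv f t := ⟨_, rfl⟩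
  rw [← hc] at hlt
  obtain ⟨δ, hδdef⟩ : ∃ δ, δ = u * c - v := ⟨_, rfl⟩
  have hδ : 0 < δ := by rw [hδdef]; linarith
  obtain ⟨ε, hεdef⟩ : ∃ ε, ε = δ / (2 * (|u| + 1)) := ⟨_, rfl⟩
  have hε : 0 < ε := by rw [hεdef]; positivity
  have hlo := (hasDerivAt_iff_isLittleO.mp hf.hasDerivAt).def hε
  simp only [smul_eq_mul, Real.norm_eq_abs, ← hc] at hlo
  rw [Metric.eventually_nhds_iff] at hlo
  obtain ⟨r, hr, hest⟩ := hlo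
  obtain ⟨K, hKdef⟩ : ∃ K, K = δ / (2 * (1 + |c| + ε)) := ⟨_, rfl⟩
  have hK : 0 < K := by rw [hKdef]; positivity
  obtain ⟨h₀, hh₀def⟩ : ∃ h₀, h₀ = min (r / (2 * (|u| + 1))) (r / (2 * K)) := ⟨_, rfl⟩
  have hh₀ : 0 < h₀ := by rw [hh₀def]; positivity
  have hεu : ε * |u| ≤ δ / 2 := by
    have h1 : ε * (2 * (|u| + 1)) = δ := by
      rw [hεdef]; field_simp
    nlinarith [abs_nonneg u, hε.le]
  have hKe : K * (2 * (1 + |c| + ε)) = δ := by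
    rw [hKdef]; field_simp
  have hev : ∀ᶠ h in nhdsWithin (0:ℝ) (Set.Ioi 0),
      K ≤ infDist (((t, f t) : ℝ × ℝ) + h • (u, v)) (Epi f) / h := by
    filter_upwards [Ioo_mem_nhdsGT_of_mem (Set.mem_Ico.mpr ⟨le_refl 0, hh₀⟩)] with h hmem'
    obtain ⟨hh, hh₀'⟩ := hmem'
    have hq : ((t, f t) : ℝ × ℝ) + h • (u, v) = (t + h*u, f t + h*v) := by
      simp [Prod.ext_iff, smul_eq_mul]
    have hclaim : ∀ p ∈ Epi f, K * h ≤ dist ((t + h*u, f t + h*v) : ℝ × ℝ) p := by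
      rintro ⟨x, y⟩ hp
      have hfy : f x ≤ y := hp
      obtain ⟨A, hA⟩ : ∃ A, A = dist ((t + h*u, f t + h*v) : ℝ × ℝ) (x, y) := ⟨_, rfl⟩
      have hd1 : |x - (t + h*u)| ≤ A := by
        rw [hA, Prod.dist_eq]
        refine le_trans ?_ (le_max_left _ _)
        rw [Real.dist_eq, abs_sub_comm]
      have hd2 : y - (f t + h*v) ≤ A := by
        rw [hA, Prod.dist_eq]
        refine le_trans ?_ (le_max_right _ _)
        rw [Real.dist_eq, abs_sub_comm]
        exact le_abs_self _
      obtain ⟨a, ha⟩ : ∃ a, a = x - (t + h*u) := ⟨_, rfl⟩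
      rw [← ha] at hd1
      have habs : |x - t| ≤ |a| + h * |u| := by
        have : x - t = a + h * u := by rw [ha]; ring
        rw [this]
        calc |a + h*u| ≤ |a| + |h*u| := abs_add_le _ _
          _ = |a| + h * |u| := by rw [abs_mul, abs_of_pos hh]
      by_cases hx : dist x t < r
      · have hest' : |f x - f t - (x - t) * c| ≤ ε * |x - t| := hest hx
        have hfx : f t + (x - t) * c - ε * |x - t| ≤ f x := by
          have := neg_abs_le (f x - f t - (x - t) * c)
          linarith
        have hac : -(|a| * |c|) ≤ a * c := by
          rw [← abs_mul]; exact neg_abs_le _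
        have hmain : h * δ / 2 - (|c| + ε) * |a| ≤ y - (f t + h*v) := by
          have h1 : (x - t) * c = a * c + h * (u * c) := by rw [ha]; ring
          have h2 : ε * |x - t| ≤ ε * |a| + ε * |u| * h := by
            nlinarith [hε.le]
          nlinarith [hεu, hh.le]
        rcases le_or_gt (K * h) |a| with hca | hca
        · linarith
        · nlinarith [mul_le_mul_of_nonneg_left hca.le
            (add_nonneg (abs_nonneg c) hε.le)]
      · push_neg at hx
        rw [Real.dist_eq] at hx
        have h1 : h * (|u| + 1) ≤ r / 2 := by
          have h1' : h ≤ r / (2 * (|u| + 1)) := le_trans hh₀'.le (hh₀def ▸ min_le_left _ _)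
          rw [le_div_iff₀ (by positivity)] at h1'
          calc h * (|u| + 1) = h * (2 * (|u| + 1)) / 2 := by ring
            _ ≤ r / 2 := by linarith
        have h2 : K * h ≤ r / 2 := by
          have h3 : h ≤ r / (2 * K) := le_trans hh₀'.le (hh₀def ▸ min_le_right _ _)
          rw [le_div_iff₀ (by positivity)] at h3
          calc K * h = h * (2 * K) / 2 := by ring
            _ ≤ r / 2 := by linarith
        have hmul : h * (|u| + 1) = h * |u| + h := by ring
        have h4 : r / 2 ≤ |a| := by linarith
        linarith
    have hne : (Epi f).Nonempty := ⟨(t, f t), le_refl (f t)⟩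
    have h5 : K * h ≤ infDist (((t, f t) : ℝ × ℝ) + h • (u, v)) (Epi f) := by
      rw [hq]
      by_contra hcon
      push_neg at hcon
      obtain ⟨p, hpmem, hplt⟩ := (infDist_lt_iff hne).mp hcon
      exact absurd (hclaim p hpmem) (not_le.mpr hplt)
    rw [le_div_iff₀ hh]
    linarith
  have hcob : IsCoboundedUnder (· ≥ ·) (nhdsWithin (0:ℝ) (Set.Ioi 0))
      (fun h : ℝ => infDist (((t, f t) : ℝ × ℝ) + h • (u, v)) (Epi f) / h) := by
    apply Filter.IsBoundedUnder.isCoboundedUnder_ge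
    have hub := ((phi_tendsto f t hf u).sub_const v).max
      (tendsto_const_nhds : Tendsto (fun _ : ℝ => (0:ℝ)) _ _)
    refine (hub.isBoundedUnder_le).mono_le ?_
    filter_upwards [self_mem_nhdsWithin] with h hh
    exact quot_le f t u v h hh
  have hfin := Filter.le_liminf_of_le hcob hev
  have hmem0 : Filter.liminf
      (fun h : ℝ => infDist (((t, f t) : ℝ × ℝ) + h • (u, v)) (Epi f) / h)
      (nhdsWithin 0 (Set.Ioi 0)) = 0 := hmem
  rw [hmem0] at hfin
  linarith

theorem epider_of_differentiable (f : ℝ → ℝ) (t : ℝ)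
    (hf : DifferentiableAt ℝ f t) (u : ℝ) :
    epider f t u = ((u * deriv f t : ℝ) : EReal) := by
  unfold epider
  apply le_antisymm
  · exact sInf_le ⟨u * deriv f t, rfl, memA f t hf u _ le_rfl⟩
  · apply le_sInf
    rintro w ⟨v, rfl, hv⟩
    exact_mod_cast memB f t hf u v hv
end
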